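/- Let f satisfy Assumption 1 and u satisfy Assumption 2, and suppose the minimizer T^u_i(x) = argmin_{y_i ∈ ℝ^{n_i}} u_i(y_i;x) + λ_i‖y_i‖₀ is attained. Then for any x ∈ ℝⁿ and any i ∈ [N], the point x⁺ = x + U_i(T^u_i(x) − x_i) satisfies F(x⁺) ≤ F(x) − (μ_i/2)‖T^u_i(x) − x_i‖². -/

import Mathlib

open scoped RealInnerProductSpace
open Finset

/-- The weighted ℓ₀ quasinorm `‖x‖_{0,λ}`. -/
noncomputable def l0norm {n N : ℕ} (blk : Fin n → Fin N) (lam : Fin N → ℝ)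
    (x : EuclideanSpace ℝ (Fin n)) : ℝ :=
  ∑ j, if x j ≠ 0 then lam (blk j) else 0

/-- Membership in `I(x) = supp(x) ∪ {j ∈ 𝒮ᵢ : λᵢ = 0}`. -/
def InIset {n N : ℕ} (blk : Fin n → Fin N) (lam : Fin N → ℝ)
    (x : EuclideanSpace ℝ (Fin n)) (j : Fin n) : Prop :=
  x j ≠ 0 ∨ lam (blk j) = 0

/-- Block restriction `xᵢ = Uᵢᵀ x`. -/
noncomputable def blkProj {n N : ℕ} (blk : Fin n → Fin N) (i : Fin N)
    (x : EuclideanSpace ℝ (Fin n)) : EuclideanSpace ℝ {j : Fin n // blk j = i} :=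
  WithLp.toLp 2 (fun j => x j.1)

/-- Block embedding `Uᵢ hᵢ`. -/
noncomputable def blkEmbed {n N : ℕ} (blk : Fin n → Fin N) (i : Fin N)
    (v : EuclideanSpace ℝ {j : Fin n // blk j = i}) : EuclideanSpace ℝ (Fin n) :=
  WithLp.toLp 2 (fun j => if h : blk j = i then v ⟨j, h⟩ else 0)

/-- Assumption 2 on the family of approximation functions `uᵢ(·;·)`, with gradients
(in the first argument) `guᵢ`, Lipschitz constants `Mᵢ > Lᵢ` and curvature constants
`μᵢ ∈ (0, Mᵢ - Lᵢ]`. -/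
structure ApproxAssumption {n N : ℕ} (blk : Fin n → Fin N)
    (f : EuclideanSpace ℝ (Fin n) → ℝ)
    (g : EuclideanSpace ℝ (Fin n) → EuclideanSpace ℝ (Fin n))
    (L : Fin N → ℝ)
    (u : ∀ i : Fin N, EuclideanSpace ℝ {j : Fin n // blk j = i} →
      EuclideanSpace ℝ (Fin n) → ℝ)
    (gu : ∀ i : Fin N, EuclideanSpace ℝ {j : Fin n // blk j = i} →
      EuclideanSpace ℝ (Fin n) → EuclideanSpace ℝ {j : Fin n // blk j = i})
    (M μ : Fin N → ℝ) : Prop where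
  strictConvexOn : ∀ i x, StrictConvexOn ℝ Set.univ (fun v => u i v x)
  hasGradient : ∀ i x v, HasGradientAt (fun w => u i w x) (gu i v x) v
  continuous_second : ∀ i v, Continuous fun x => u i v x
  value_at : ∀ i x, u i (blkProj blk i x) x = f x
  gradient_at : ∀ i x, gu i (blkProj blk i x) x = blkProj blk i (g x)
  lipschitz_grad : ∀ i x v w, ‖gu i v x - gu i w x‖ ≤ M i * ‖v - w‖
  M_gt_L : ∀ i, L i < M i
  mu_pos : ∀ i, 0 < μ i
  mu_le : ∀ i, μ i ≤ M i - L i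
  lower_bound : ∀ i x v,
    f (x + blkEmbed blk i (v - blkProj blk i x)) + μ i / 2 * ‖v - blkProj blk i x‖ ^ 2
      ≤ u i v x

/-- `z` is a `u`-strong local minimizer: `F(z) ≤ min_{yᵢ} uᵢ(yᵢ;z) + ‖z + Uᵢ(yᵢ - zᵢ)‖_{0,λ}`
for all blocks `i`. -/
def IsUStrongLocalMin {n N : ℕ} (blk : Fin n → Fin N) (lam : Fin N → ℝ)
    (f : EuclideanSpace ℝ (Fin n) → ℝ)
    (u : ∀ i : Fin N, EuclideanSpace ℝ {j : Fin n // blk j = i} →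
      EuclideanSpace ℝ (Fin n) → ℝ)
    (z : EuclideanSpace ℝ (Fin n)) : Prop :=
  ∀ (i : Fin N) (y : EuclideanSpace ℝ {j : Fin n // blk j = i}),
    f z + l0norm blk lam z ≤
      u i y z + l0norm blk lam (z + blkEmbed blk i (y - blkProj blk i z))

/-- The number of nonzero entries of a block vector, `‖yᵢ‖₀`, as a real number. -/
noncomputable def blkNnz {n N : ℕ} {blk : Fin n → Fin N} {i : Fin N}
    (v : EuclideanSpace ℝ {j : Fin n // blk j = i}) : ℝ :=
  ∑ j, if v j ≠ 0 then (1 : ℝ) else 0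

lemma l0norm_split {n N : ℕ} (blk : Fin n → Fin N) (lam : Fin N → ℝ) (i : Fin N)
    (x : EuclideanSpace ℝ (Fin n)) :
    l0norm blk lam x = lam i * blkNnz (blkProj blk i x)
      + ∑ j ∈ Finset.univ.filter (fun j => ¬ blk j = i),
          (if x j ≠ 0 then lam (blk j) else 0) := by
  rw [l0norm, ← Finset.sum_filter_add_sum_filter_not Finset.univ (fun j => blk j = i)]
  congr 1
  have h1 : ∀ j ∈ Finset.univ.filter (fun j => blk j = i),
      (if x j ≠ 0 then lam (blk j) else 0) = (if x j ≠ 0 then lam i else 0) := by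
    intro j hj
    simp only [Finset.mem_filter] at hj
    rw [hj.2]
  rw [Finset.sum_congr rfl h1,
    Finset.sum_subtype (p := fun j => blk j = i)
      (Finset.univ.filter (fun j => blk j = i)) (by simp)
      (fun j => if x j ≠ 0 then lam i else 0)]
  rw [blkNnz, Finset.mul_sum]
  apply Finset.sum_congr rfl
  intro j _
  simp [blkProj, mul_ite]
  split_ifs <;> simp_all

lemma xplus_apply {n N : ℕ} (blk : Fin n → Fin N) (i : Fin N)
    (x : EuclideanSpace ℝ (Fin n)) (v : EuclideanSpace ℝ {j : Fin n // blk j = i})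
    (j : Fin n) :
    (x + blkEmbed blk i (v - blkProj blk i x)) j
      = if h : blk j = i then v ⟨j, h⟩ else x j := by
  have : (x + blkEmbed blk i (v - blkProj blk i x)) j
      = x j + blkEmbed blk i (v - blkProj blk i x) j := rfl
  rw [this, blkEmbed]
  split_ifs with h
  · have : (v - blkProj blk i x) ⟨j, h⟩ = v ⟨j, h⟩ - x j := rfl
    simp only [WithLp.ofLp_toLp, dif_pos h, this]; ring
  · simp only [WithLp.ofLp_toLp, dif_neg h]; ring

lemma l0norm_update {n N : ℕ} (blk : Fin n → Fin N) (lam : Fin N → ℝ) (i : Fin N)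
    (x : EuclideanSpace ℝ (Fin n)) (v : EuclideanSpace ℝ {j : Fin n // blk j = i}) :
    l0norm blk lam (x + blkEmbed blk i (v - blkProj blk i x))
        + lam i * blkNnz (blkProj blk i x)
      = l0norm blk lam x + lam i * blkNnz v := by
  rw [l0norm_split blk lam i x, l0norm_split blk lam i (x + blkEmbed blk i (v - blkProj blk i x))]
  have h2 : ∑ j ∈ Finset.univ.filter (fun j => ¬ blk j = i),
      (if (x + blkEmbed blk i (v - blkProj blk i x)) j ≠ 0 then lam (blk j) else 0)
      = ∑ j ∈ Finset.univ.filter (fun j => ¬ blk j = i),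
      (if x j ≠ 0 then lam (blk j) else 0) := by
    apply Finset.sum_congr rfl
    intro j hj
    simp only [Finset.mem_filter] at hj
    rw [xplus_apply, dif_neg hj.2]
  have h3 : blkProj blk i (x + blkEmbed blk i (v - blkProj blk i x)) = v := by
    ext j
    have : blkProj blk i (x + blkEmbed blk i (v - blkProj blk i x)) j
        = (x + blkEmbed blk i (v - blkProj blk i x)) j.1 := rfl
    rw [this, xplus_apply, dif_pos j.2]
  rw [h2, h3]
  ring

/-- One step of the block iterative hard-thresholding map decreases
`F` by at least `(μᵢ/2)‖T^u_i(x) - xᵢ‖²`. -/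
theorem statement8 {n N : ℕ} (blk : Fin n → Fin N) (lam : Fin N → ℝ)
    (hlam : ∀ i, 0 ≤ lam i) (hlam_pos : ∃ i, 0 < lam i)
    (f : EuclideanSpace ℝ (Fin n) → ℝ)
    (g : EuclideanSpace ℝ (Fin n) → EuclideanSpace ℝ (Fin n))
    (hconv : ConvexOn ℝ Set.univ f)
    (hgrad : ∀ x, HasGradientAt f (g x) x)
    (L : Fin N → ℝ) (hL : ∀ i, 0 < L i)
    (hLip : ∀ (i : Fin N) (x : EuclideanSpace ℝ (Fin n))
      (h : EuclideanSpace ℝ {j : Fin n // blk j = i}),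
      ‖blkProj blk i (g (x + blkEmbed blk i h)) - blkProj blk i (g x)‖ ≤ L i * ‖h‖)
    (u : ∀ i : Fin N, EuclideanSpace ℝ {j : Fin n // blk j = i} →
      EuclideanSpace ℝ (Fin n) → ℝ)
    (gu : ∀ i : Fin N, EuclideanSpace ℝ {j : Fin n // blk j = i} →
      EuclideanSpace ℝ (Fin n) → EuclideanSpace ℝ {j : Fin n // blk j = i})
    (M μ : Fin N → ℝ)
    (hu : ApproxAssumption blk f g L u gu M μ)
    (T : ∀ i : Fin N, EuclideanSpace ℝ (Fin n) →
      EuclideanSpace ℝ {j : Fin n // blk j = i})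
    (hT : ∀ (i : Fin N) (x : EuclideanSpace ℝ (Fin n))
      (y : EuclideanSpace ℝ {j : Fin n // blk j = i}),
      u i (T i x) x + lam i * blkNnz (T i x) ≤ u i y x + lam i * blkNnz y) :
    ∀ (x : EuclideanSpace ℝ (Fin n)) (i : Fin N),
      f (x + blkEmbed blk i (T i x - blkProj blk i x))
          + l0norm blk lam (x + blkEmbed blk i (T i x - blkProj blk i x))
        ≤ f x + l0norm blk lam x - μ i / 2 * ‖T i x - blkProj blk i x‖ ^ 2 := by
  intro x i
  have h1 := hu.lower_bound i x (T i x)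
  have h2 := hT i x (blkProj blk i x)
  rw [hu.value_at i x] at h2
  have h5 := l0norm_update blk lam i x (T i x)
  linarith
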